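/- Let f : ℝⁿ → ℝ be convex and satisfy the standing jet assumptions. Let (xⁱ) → x̄ in ℝⁿ and (εᵢ) be positive with εᵢ → 0. If limsup_{i→∞} (θ(xⁱ, εᵢ) − f(xⁱ))/εᵢ ≥ 0, where θ(x,ε) := min_{z ∈ B_ε(x)} 𝒯_{x,ε}(z), then x̄ is a global minimizer of f. -/

import Mathlib

open Metric Set Filter Topology

noncomputable section

abbrev Euc (n : ℕ) := EuclideanSpace ℝ (Fin n)

abbrev JetSpace (n : ℕ) :=
  Euc n × ℝ × (Euc n →L[ℝ] ℝ) × (Euc n →L[ℝ] Euc n →L[ℝ] ℝ)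

variable {n : ℕ}

/-- The 4-tuple of coefficients of the second-order Taylor expansion of `f` at `y`. -/
def jetMap (f : Euc n → ℝ) (y : Euc n) : JetSpace n :=
  (y, f y, fderiv ℝ f y, fderiv ℝ (fderiv ℝ f) y)

/-- The second-order ε-jet of `f` at `x`. -/
def jet (f : Euc n → ℝ) (D2 : Set (Euc n)) (ε : ℝ) (x : Euc n) : Set (JetSpace n) :=
  ⋂ δ ∈ Ioi ε, closure (jetMap f '' (closedBall x δ ∩ D2))

/-- The quadratic polynomial associated to a jet element. -/
def Qpoly (j : JetSpace n) (z : Euc n) : ℝ :=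
  j.2.1 + j.2.2.1 (z - j.1) + (1 / 2) * j.2.2.2 (z - j.1) (z - j.1)

/-- The second-order model `𝒯_{x,ε}`. -/
def model (f : Euc n → ℝ) (D2 : Set (Euc n)) (ε : ℝ) (x z : Euc n) : ℝ :=
  sSup ((fun j => Qpoly j z) '' jet f D2 ε x)

/-- `θ(x,ε)`, the optimal value of the model on the closed ε-ball. -/
def theta (f : Euc n → ℝ) (D2 : Set (Euc n)) (ε : ℝ) (x : Euc n) : ℝ :=
  sInf (model f D2 ε x '' closedBall x ε)

/-- The model `𝒯^W_{x,ε}` built from a subset `W` of the jet. -/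
def modelW (W : Set (JetSpace n)) (z : Euc n) : ℝ :=
  sSup ((fun j => Qpoly j z) '' W)

/-- `θ^W(x,ε)`, the optimal value of the finite model on the closed ε-ball. -/
def thetaW (W : Set (JetSpace n)) (ε : ℝ) (x : Euc n) : ℝ :=
  sInf (modelW W '' closedBall x ε)

/-- The Clarke subdifferential of `f` at `y`. -/
def clarke (f : Euc n → ℝ) (y : Euc n) : Set (Euc n →L[ℝ] ℝ) :=
  convexHull ℝ {ξ | ∃ u : ℕ → Euc n, (∀ j, DifferentiableAt ℝ f (u j)) ∧
    Tendsto u atTop (𝓝 y) ∧ Tendsto (fun j => fderiv ℝ f (u j)) atTop (𝓝 ξ)}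

/-- The Goldstein ε-subdifferential of `f` at `x`. -/
def goldstein (f : Euc n → ℝ) (ε : ℝ) (x : Euc n) : Set (Euc n →L[ℝ] ℝ) :=
  convexHull ℝ (⋂ δ ∈ Ioi ε, closure
    {g : Euc n →L[ℝ] ℝ | ∃ y ∈ closedBall x δ, DifferentiableAt ℝ f y ∧ g = fderiv ℝ f y})

/-- The standing assumptions: `f` locally Lipschitz, `D2` the set of points of twice
differentiability, its complement a Lebesgue null set, and Hessians locally bounded. -/
def StandingAssumptions (f : Euc n → ℝ) (D2 : Set (Euc n)) : Prop :=
  LocallyLipschitz f ∧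
  D2 = {y | DifferentiableAt ℝ f y ∧ DifferentiableAt ℝ (fderiv ℝ f) y} ∧
  MeasureTheory.volume D2ᶜ = 0 ∧
  ∀ x : Euc n, ∃ U : Set (Euc n), IsOpen U ∧ x ∈ U ∧
    Bornology.IsBounded ((fun y => fderiv ℝ (fderiv ℝ f) y) '' (U ∩ D2))

lemma subgrad {f : Euc n → ℝ} (hconv : ConvexOn ℝ univ f) {y : Euc n}
    (hy : DifferentiableAt ℝ f y) (z : Euc n) :
    f y + fderiv ℝ f y (z - y) ≤ f z := by
  rcases eq_or_ne z y with rfl | hzy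
  · simp
  · set L : ℝ → Euc n := fun t => y + t • (z - y) with hL
    have hgconv : ConvexOn ℝ univ (f ∘ L) := by
      have : f ∘ L = f ∘ (AffineMap.lineMap y z : ℝ →ᵃ[ℝ] Euc n) := by
        funext t
        simp [hL, AffineMap.lineMap_apply_module', add_comm]
      rw [this]
      simpa using hconv.comp_affineMap (AffineMap.lineMap y z)
    have hLd : HasDerivAt L (z - y) 0 := by
      simpa [hL] using ((hasDerivAt_id (0:ℝ)).smul_const (z - y)).const_add y
    have hfd : HasDerivAt (f ∘ L) (fderiv ℝ f y (z - y)) 0 := by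
      have : HasFDerivAt f (fderiv ℝ f y) (L 0) := by simpa [hL] using hy.hasFDerivAt
      exact this.comp_hasDerivAt 0 hLd
    have := hgconv.le_slope_of_hasDerivAt (mem_univ (0:ℝ)) (mem_univ (1:ℝ)) one_pos hfd
    rw [slope_def_field] at this
    simp only [Function.comp, hL] at this
    simp only [zero_smul, add_zero, one_smul, add_sub_cancel] at this
    linarith

set_option synthInstance.maxHeartbeats 400000 in
lemma qpoly_cont (z : Euc n) : Continuous fun j : JetSpace n => Qpoly j z := by
  unfold Qpoly; fun_prop

lemma qpoly_cont2 (j : JetSpace n) : Continuous fun z : Euc n => Qpoly j z := by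
  unfold Qpoly; fun_prop

lemma theta_bounds {f : Euc n → ℝ} {D2 : Set (Euc n)} (hconv : ConvexOn ℝ univ f)
    (hD2 : ∀ y ∈ D2, DifferentiableAt ℝ f y)
    {x : Euc n} {ε M : ℝ} (hε : 0 < ε) (hM : 0 ≤ M)
    (hden : (closedBall x ε ∩ D2).Nonempty)
    (hHess : ∀ y ∈ closedBall x (2*ε) ∩ D2, ‖fderiv ℝ (fderiv ℝ f) y‖ ≤ M)
    {K : NNReal} {T : Set (Euc n)} (hT : LipschitzOnWith K f T)
    (hTsub : closedBall x (3*ε) ⊆ T)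
    {zs : Euc n} (hzs : ε ≤ ‖zs - x‖) :
    f x - 3*(K:ℝ)*ε - 2*M*ε^2 ≤ theta f D2 ε x ∧
    theta f D2 ε x ≤ f x + (ε / ‖zs - x‖) * (f zs - f x) + (9/2) * M * ε^2 := by
  obtain ⟨ys, hysball, hysD2⟩ := hden
  set j0 : JetSpace n := jetMap f ys with hj0def
  have hj0 : j0 ∈ jet f D2 ε x :=
    mem_iInter₂.2 fun δ hδ => subset_closure
      ⟨ys, ⟨closedBall_subset_closedBall (le_of_lt hδ) hysball, hysD2⟩, rfl⟩
  have hub : ∀ j ∈ jet f D2 ε x, ∀ z' ∈ closedBall x ε,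
      Qpoly j z' ≤ f z' + (9/2) * M * ε^2 := by
    intro j hj z' hz'
    have hjmem : j ∈ closure (jetMap f '' (closedBall x (2*ε) ∩ D2)) :=
      mem_iInter₂.1 hj (2*ε) (by simpa using (lt_two_mul_self hε))
    have hclosed : IsClosed {j : JetSpace n | Qpoly j z' ≤ f z' + (9/2)*M*ε^2} :=
      isClosed_le (qpoly_cont z') continuous_const
    refine hclosed.closure_subset_iff.2 ?_ hjmem
    rintro _ ⟨y, ⟨hyball, hyD2⟩, rfl⟩
    have h1 : f y + fderiv ℝ f y (z' - y) ≤ f z' := subgrad hconv (hD2 y hyD2) z'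
    have hnorm : ‖z' - y‖ ≤ 3*ε := by
      have h3 : dist z' y ≤ dist z' x + dist x y := dist_triangle z' x y
      have h4 : dist z' x ≤ ε := mem_closedBall.1 hz'
      have h5 : dist x y ≤ 2*ε := by
        rw [dist_comm]; exact mem_closedBall.1 hyball
      rw [← dist_eq_norm]; linarith
    set H := fderiv ℝ (fderiv ℝ f) y with hH
    have hHM : ‖H‖ ≤ M := hHess y ⟨hyball, hyD2⟩
    have h2 : H (z' - y) (z' - y) ≤ M * (3*ε) * (3*ε) := by
      have ha : H (z' - y) (z' - y) ≤ ‖H (z' - y) (z' - y)‖ := le_abs_self _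
      have hb : ‖H (z' - y) (z' - y)‖ ≤ ‖H (z' - y)‖ * ‖z' - y‖ :=
        (H (z' - y)).le_opNorm _
      have hc : ‖H (z' - y)‖ ≤ ‖H‖ * ‖z' - y‖ := H.le_opNorm _
      have hd : ‖H (z' - y)‖ * ‖z' - y‖ ≤ (‖H‖ * ‖z' - y‖) * ‖z' - y‖ :=
        mul_le_mul_of_nonneg_right hc (norm_nonneg _)
      have he : (‖H‖ * ‖z' - y‖) * ‖z' - y‖ ≤ (M * (3*ε)) * (3*ε) := by
        have h0 : (0:ℝ) ≤ ‖z' - y‖ := norm_nonneg _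
        have hf1 : ‖H‖ * ‖z' - y‖ ≤ M * (3*ε) := mul_le_mul hHM hnorm h0 hM
        have hf2 : (0:ℝ) ≤ M * (3*ε) := by positivity
        exact mul_le_mul hf1 hnorm h0 hf2
      linarith
    simp only [Qpoly, jetMap, mem_setOf_eq]
    nlinarith
  have hne : (jet f D2 ε x).Nonempty := ⟨j0, hj0⟩
  have hba : ∀ z' ∈ closedBall x ε, BddAbove ((fun j => Qpoly j z') '' jet f D2 ε x) :=
    fun z' hz' => ⟨f z' + (9/2)*M*ε^2, by
      rintro _ ⟨j, hj, rfl⟩; exact hub j hj z' hz'⟩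
  have hmodel_ge : ∀ z' ∈ closedBall x ε, Qpoly j0 z' ≤ model f D2 ε x z' :=
    fun z' hz' => le_csSup (hba z' hz') (mem_image_of_mem _ hj0)
  have hmodel_le : ∀ z' ∈ closedBall x ε, model f D2 ε x z' ≤ f z' + (9/2)*M*ε^2 :=
    fun z' hz' => csSup_le (hne.image _) (by rintro _ ⟨j, hj, rfl⟩; exact hub j hj z' hz')
  -- lower bound on Qpoly j0 over the ball
  have hlb : ∀ z' ∈ closedBall x ε, f x - 3*(K:ℝ)*ε - 2*M*ε^2 ≤ Qpoly j0 z' := by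
    intro z' hz'
    have hdysx : dist ys x ≤ ε := mem_closedBall.1 hysball
    have hmemx : x ∈ T := hTsub (mem_closedBall_self (by linarith))
    have hmemys : ys ∈ T := hTsub (closedBall_subset_closedBall (by linarith) hysball)
    have hdysz : ‖ys - z'‖ ≤ 2*ε := by
      rw [← dist_eq_norm]
      calc dist ys z' ≤ dist ys x + dist x z' := dist_triangle _ _ _
        _ ≤ ε + ε := add_le_add hdysx (by rw [dist_comm]; exact mem_closedBall.1 hz')
        _ = 2*ε := by ring
    have hmemw : ys + (ys - z') ∈ T := by
      apply hTsub
      rw [mem_closedBall, dist_eq_norm]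
      calc ‖ys + (ys - z') - x‖ = ‖(ys - x) + (ys - z')‖ := by congr 1; abel
        _ ≤ ‖ys - x‖ + ‖ys - z'‖ := norm_add_le _ _
        _ ≤ ε + 2*ε := add_le_add (by rw [← dist_eq_norm]; exact hdysx) hdysz
        _ = 3*ε := by ring
    -- f ys ≥ f x - K ε
    have hfy : f x - (K:ℝ)*ε ≤ f ys := by
      have := hT.dist_le_mul x hmemx ys hmemys
      rw [Real.dist_eq] at this
      have habs : f x - f ys ≤ (K:ℝ) * dist x ys := (le_abs_self _).trans this
      have : (K:ℝ) * dist x ys ≤ (K:ℝ) * ε := by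
        apply mul_le_mul_of_nonneg_left _ K.coe_nonneg
        rw [dist_comm]; exact hdysx
      linarith
    -- gradient term
    have hgrad : -(2*(K:ℝ)*ε) ≤ fderiv ℝ f ys (z' - ys) := by
      have hsg := subgrad hconv (hD2 ys hysD2) (ys + (ys - z'))
      have heq1 : ys + (ys - z') - ys = ys - z' := by abel
      rw [heq1] at hsg
      have hlipw : f ys - f (ys + (ys - z')) ≥ -((K:ℝ) * (2*ε)) := by
        have := hT.dist_le_mul ys hmemys (ys + (ys - z')) hmemw
        rw [Real.dist_eq] at this
        have habs : f (ys + (ys - z')) - f ys ≤ (K:ℝ) * dist ys (ys + (ys - z')) :=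
          (le_abs_self _).trans (by rwa [abs_sub_comm] at this)
        have hdist : dist ys (ys + (ys - z')) = ‖ys - z'‖ := by
          rw [dist_eq_norm', add_sub_cancel_left]
        rw [hdist] at habs
        have : (K:ℝ) * ‖ys - z'‖ ≤ (K:ℝ) * (2*ε) :=
          mul_le_mul_of_nonneg_left hdysz K.coe_nonneg
        linarith
      have hlin : fderiv ℝ f ys (z' - ys) = -(fderiv ℝ f ys (ys - z')) := by
        have hss : (z' - ys) = -(ys - z') := by abel
        rw [hss, map_neg]
      rw [hlin]
      linarith
    -- Hessian term
    have hHys : ‖fderiv ℝ (fderiv ℝ f) ys‖ ≤ M :=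
      hHess ys ⟨closedBall_subset_closedBall (by linarith) hysball, hysD2⟩
    have hhess2 : -(M * (2*ε) * (2*ε)) ≤ fderiv ℝ (fderiv ℝ f) ys (z' - ys) (z' - ys) := by
      set H := fderiv ℝ (fderiv ℝ f) ys with hH
      have hnv : ‖z' - ys‖ ≤ 2*ε := by
        rw [← neg_sub, norm_neg]; exact hdysz
      have ha : -(H (z' - ys) (z' - ys)) ≤ ‖H (z' - ys) (z' - ys)‖ := neg_le_abs _
      have hb : ‖H (z' - ys) (z' - ys)‖ ≤ ‖H (z' - ys)‖ * ‖z' - ys‖ :=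
        (H (z' - ys)).le_opNorm _
      have hc : ‖H (z' - ys)‖ ≤ ‖H‖ * ‖z' - ys‖ := H.le_opNorm _
      have h0 : (0:ℝ) ≤ ‖z' - ys‖ := norm_nonneg _
      have hf1 : ‖H‖ * ‖z' - ys‖ ≤ M * (2*ε) := mul_le_mul hHys hnv h0 hM
      have hf2 : ‖H (z' - ys)‖ * ‖z' - ys‖ ≤ (M * (2*ε)) * (2*ε) :=
        (mul_le_mul_of_nonneg_right hc h0).trans
          (mul_le_mul hf1 hnv h0 (by positivity))
      linarith
    have : Qpoly j0 z' = f ys + fderiv ℝ f ys (z' - ys)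
        + (1/2) * fderiv ℝ (fderiv ℝ f) ys (z' - ys) (z' - ys) := rfl
    rw [this]
    nlinarith
  have hbb : BddBelow (model f D2 ε x '' closedBall x ε) :=
    ⟨f x - 3*(K:ℝ)*ε - 2*M*ε^2, by
      rintro _ ⟨z', hz', rfl⟩
      exact (hlb z' hz').trans (hmodel_ge z' hz')⟩
  constructor
  · refine le_csInf ⟨model f D2 ε x x, mem_image_of_mem _ (mem_closedBall_self hε.le)⟩ ?_
    rintro _ ⟨z', hz', rfl⟩
    exact (hlb z' hz').trans (hmodel_ge z' hz')
  have hRpos : 0 < ‖zs - x‖ := lt_of_lt_of_le hε hzs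
  set t := ε / ‖zs - x‖ with htdef
  have ht0 : 0 < t := div_pos hε hRpos
  have ht1 : t ≤ 1 := (div_le_one hRpos).2 hzs
  set z0 := x + t • (zs - x) with hz0def
  have hz0 : z0 ∈ closedBall x ε := by
    rw [mem_closedBall, dist_eq_norm]
    have : z0 - x = t • (zs - x) := by rw [hz0def]; abel
    rw [this, norm_smul, Real.norm_eq_abs, abs_of_pos ht0, htdef,
      div_mul_cancel₀ _ hRpos.ne']
  have h5 : theta f D2 ε x ≤ model f D2 ε x z0 := csInf_le hbb (mem_image_of_mem _ hz0)
  have h6 : f z0 ≤ f x + t * (f zs - f x) := by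
    have hc := hconv.2 (mem_univ x) (mem_univ zs)
      (sub_nonneg.2 ht1) ht0.le (by ring : (1 - t) + t = 1)
    have heq : (1 - t) • x + t • zs = z0 := by
      rw [hz0def]; module
    rw [heq] at hc
    simp only [smul_eq_mul] at hc
    linarith
  have h7 := hmodel_le z0 hz0
  linarith

lemma ball_inter_nonempty {D2 : Set (Euc n)} (hnull : MeasureTheory.volume D2ᶜ = 0)
    (x : Euc n) {ε : ℝ} (hε : 0 < ε) : (closedBall x ε ∩ D2).Nonempty := by
  by_contra h
  rw [not_nonempty_iff_eq_empty] at h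
  have hsub : ball x ε ⊆ D2ᶜ := fun y hy hyD =>
    (h ▸ (⟨ball_subset_closedBall hy, hyD⟩ : y ∈ closedBall x ε ∩ D2) : y ∈ (∅:Set (Euc n)))
  have hpos : 0 < MeasureTheory.volume (ball x ε) := measure_ball_pos _ _ hε
  exact absurd (le_antisymm ((MeasureTheory.measure_mono hsub).trans hnull.le) zero_le)
    hpos.ne'

theorem limsup_nonneg_implies_min (f : Euc n → ℝ) (D2 : Set (Euc n))
    (hf : StandingAssumptions f D2) (hconv : ConvexOn ℝ univ f)
    (x : ℕ → Euc n) (xbar : Euc n) (hx : Tendsto x atTop (𝓝 xbar))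
    (eps : ℕ → ℝ) (heps : ∀ i, 0 < eps i) (heps0 : Tendsto eps atTop (𝓝 0))
    (hsup : 0 ≤ atTop.limsup (fun i => (theta f D2 (eps i) (x i) - f (x i)) / eps i)) :
    ∀ z : Euc n, f xbar ≤ f z := by
  intro z0
  by_contra hlt
  rw [not_le] at hlt
  obtain ⟨hlip, hD2eq, hnull, hhess⟩ := hf
  have hD2 : ∀ y ∈ D2, DifferentiableAt ℝ f y := fun y hy => (hD2eq ▸ hy).1
  have hcont : Continuous f := hlip.continuous
  obtain ⟨U, hUopen, hUmem, hUbdd⟩ := hhess xbar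
  obtain ⟨M0, hM0⟩ := hUbdd.exists_norm_le
  set M := max M0 0 with hMdef
  have hM : 0 ≤ M := le_max_right _ _
  obtain ⟨r, hr0, hrU⟩ := Metric.nhds_basis_closedBall.mem_iff.1 (hUopen.mem_nhds hUmem)
  obtain ⟨K, T, hTmem, hT⟩ := hlip xbar
  obtain ⟨ρ, hρ0, hρT⟩ := Metric.nhds_basis_closedBall.mem_iff.1 hTmem
  set R := ‖z0 - xbar‖ with hRdef
  have hR : 0 < R := by
    rw [hRdef, norm_pos_iff, sub_ne_zero]
    rintro rfl
    exact absurd hlt (lt_irrefl _)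
  set d := f xbar - f z0 with hddef
  have hdpos : 0 < d := sub_pos.2 hlt
  set c := d / (2*R) with hcdef
  have hcpos : 0 < c := by positivity
  set u : ℕ → ℝ := fun i => (theta f D2 (eps i) (x i) - f (x i)) / eps i with hudef
  set v : ℕ → ℝ := fun i => (f z0 - f (x i)) / ‖z0 - x i‖ + (9/2)*M*eps i with hvdef
  -- v tends to -d/R
  have hfx : Tendsto (fun i => f (x i)) atTop (𝓝 (f xbar)) := (hcont.tendsto xbar).comp hx
  have hnx : Tendsto (fun i => ‖z0 - x i‖) atTop (𝓝 R) :=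
    (tendsto_const_nhds.sub hx).norm
  have hv : Tendsto v atTop (𝓝 ((f z0 - f xbar)/R + (9/2)*M*0)) :=
    ((tendsto_const_nhds.sub hfx).div hnx hR.ne').add
      ((tendsto_const_nhds.mul heps0))
  have hlim : (f z0 - f xbar)/R + (9/2)*M*0 < -c := by
    rw [mul_zero, add_zero, hcdef]
    have : (f z0 - f xbar) = -d := by rw [hddef]; ring
    rw [this, neg_div, neg_lt_neg_iff]
    rw [div_lt_div_iff₀ (by positivity) hR]
    nlinarith
  have hev1 : ∀ᶠ i in atTop, v i < -c := hv.eventually (eventually_lt_nhds hlim)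
  -- eventual smallness
  have hsx : ∀ᶠ i in atTop, dist (x i) xbar < min (r/2) (min (R/2) (ρ/2)) :=
    Metric.tendsto_nhds.mp hx _ (by positivity)
  have hse : ∀ᶠ i in atTop, dist (eps i) 0 < min (r/4) (min (R/2) (min (ρ/6) 1)) :=
    Metric.tendsto_nhds.mp heps0 _ (by positivity)
  have hev2 : ∀ᶠ i in atTop, u i ≤ v i ∧ -(3*(K:ℝ) + 2*M) ≤ u i := by
    filter_upwards [hsx, hse] with i h1 h2
    have hεi := heps i
    rw [Real.dist_eq, sub_zero, abs_of_pos hεi] at h2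
    have h2r : eps i < r/4 := h2.trans_le (min_le_left _ _)
    have h2R : eps i < R/2 := (h2.trans_le (min_le_right _ _)).trans_le (min_le_left _ _)
    have h2ρ : eps i < ρ/6 :=
      ((h2.trans_le (min_le_right _ _)).trans_le (min_le_right _ _)).trans_le (min_le_left _ _)
    have h21 : eps i < 1 :=
      ((h2.trans_le (min_le_right _ _)).trans_le (min_le_right _ _)).trans_le (min_le_right _ _)
    have h1r : dist (x i) xbar < r/2 := h1.trans_le (min_le_left _ _)
    have h1R : dist (x i) xbar < R/2 := (h1.trans_le (min_le_right _ _)).trans_le (min_le_left _ _)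
    have h1ρ : dist (x i) xbar < ρ/2 := (h1.trans_le (min_le_right _ _)).trans_le (min_le_right _ _)
    have hTsub : closedBall (x i) (3*(eps i)) ⊆ T := by
      refine subset_trans ?_ hρT
      intro w hw
      rw [mem_closedBall]
      calc dist w xbar ≤ dist w (x i) + dist (x i) xbar := dist_triangle _ _ _
        _ ≤ 3*(eps i) + ρ/2 := add_le_add (mem_closedBall.1 hw) h1ρ.le
        _ ≤ ρ := by linarith
    have hHess : ∀ y ∈ closedBall (x i) (2*(eps i)) ∩ D2,
        ‖fderiv ℝ (fderiv ℝ f) y‖ ≤ M := by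
      rintro y ⟨hy1, hy2⟩
      have hyU : y ∈ U := by
        apply hrU
        rw [mem_closedBall]
        calc dist y xbar ≤ dist y (x i) + dist (x i) xbar := dist_triangle _ _ _
          _ ≤ 2*(eps i) + r/2 := add_le_add (mem_closedBall.1 hy1) h1r.le
          _ ≤ r := by linarith
      exact le_trans (hM0 _ (mem_image_of_mem _ ⟨hyU, hy2⟩)) (le_max_left _ _)
    have hzs : eps i ≤ ‖z0 - x i‖ := by
      have : R ≤ ‖z0 - xbar‖ := le_of_eq hRdef
      have htri : R ≤ ‖z0 - x i‖ + dist (x i) xbar := by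
        calc R = ‖z0 - xbar‖ := hRdef
          _ ≤ ‖z0 - x i‖ + ‖x i - xbar‖ := by
            have := norm_sub_le_norm_sub_add_norm_sub z0 (x i) xbar
            linarith [norm_sub_le (z0 - x i) (xbar - x i)]
          _ = ‖z0 - x i‖ + dist (x i) xbar := by rw [dist_eq_norm]
      linarith
    obtain ⟨hkeyl, hkey⟩ := theta_bounds hconv hD2 hεi hM
      (ball_inter_nonempty hnull (x i) hεi) hHess hT hTsub hzs
    constructor
    · rw [hudef, hvdef]
      simp only
      rw [div_le_iff₀ hεi]
      have heq : ((f z0 - f (x i)) / ‖z0 - x i‖ + 9 / 2 * M * eps i) * eps i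
          = (eps i / ‖z0 - x i‖) * (f z0 - f (x i)) + 9/2 * M * (eps i)^2 := by
        ring
      rw [heq]
      linarith
    · rw [hudef]
      simp only
      rw [le_div_iff₀ hεi]
      have h2m : 2*M*(eps i)^2 ≤ 2*M*(eps i) := by
        nlinarith [mul_nonneg (mul_nonneg hM hεi.le) (by linarith : (0:ℝ) ≤ 1 - eps i)]
      have hexp : -(3*(K:ℝ) + 2*M) * eps i = -(3*(K:ℝ)*(eps i)) - 2*M*(eps i) := by ring
      rw [hexp]
      linarith
  have hub : ∀ᶠ i in atTop, u i ≤ -c := by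
    filter_upwards [hev1, hev2] with i ha hb
    exact hb.1.trans ha.le
  have hco : IsCoboundedUnder (· ≤ ·) atTop u :=
    Filter.isCoboundedUnder_le_of_eventually_le atTop (by
      filter_upwards [hev2] with i hb
      exact hb.2)
  have hlimsup : atTop.limsup u ≤ -c := Filter.limsup_le_of_le hco hub
  rw [hudef] at hlimsup
  linarith [le_trans hsup hlimsup]
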